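/- Let X be a Haar system space. For every dyadic interval I, the norms satisfy ‖χ_I‖_X · ‖χ_I‖_{X^*} = |I|, where ‖χ_I‖_{X^*} is the norm of the functional f ↦ ∫_I f on X. Consequently, setting μ_I = ‖χ_I‖_X^{-1} and ν_I = ‖χ_I‖_{X^*}^{-1}, the system (ν_L h_L, μ_L h_L)_{L∈D^+} is biorthogonal in X^* × X. -/

import Mathlib

open MeasureTheory Filter Set
open scoped ENNReal

noncomputable section
open Classical

/-- The dyadic interval of level `n` and position `i`. -/
def dyI (n i : ℕ) : Set ℝ := Set.Ico ((i : ℝ) / 2 ^ n) ((i + 1 : ℝ) / 2 ^ n)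

/-- The Haar function of the dyadic interval of level `n`, position `i`. -/
def haarFn (n i : ℕ) : ℝ → ℝ := fun x =>
  if x ∈ dyI (n + 1) (2 * i) then 1 else if x ∈ dyI (n + 1) (2 * i + 1) then -1 else 0

/-- Indexing of `D⁺`: `none` is the "empty" index `∅`, `some (n, i)` a dyadic interval. -/
def haarP : Option (ℕ × ℕ) → ℝ → ℝ
  | none => (Set.Ico (0 : ℝ) 1).indicator 1
  | some (n, i) => haarFn n i

/-- The interval supporting a given index of `D⁺` (with the convention that `∅` is
supported on `[0,1)`). -/
def suppI : Option (ℕ × ℕ) → Set ℝ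
  | none => Set.Ico (0 : ℝ) 1
  | some p => dyI p.1 p.2

def lenI : Option (ℕ × ℕ) → ℝ
  | none => 1
  | some (n, _i) => 1 / 2 ^ n

def validIdx : Option (ℕ × ℕ) → Prop
  | none => True
  | some (n, i) => i < 2 ^ n

/-- The position of the `k`-th member of a branch determined by signs `θ`
(`θ k = true` means the branch turns to the left half at step `k`). -/
def branchPos (θ : ℕ → Bool) : ℕ → ℕ
  | 0 => 0
  | 1 => 0
  | k + 2 => 2 * branchPos θ (k + 1) + (if θ (k + 1) then 0 else 1)

/-- The `k`-th member `I_k` of the branch determined by `θ`, as an index in `D⁺`. -/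
def branchI (θ : ℕ → Bool) (k : ℕ) : Option (ℕ × ℕ) :=
  if k = 0 then none else some (k - 1, branchPos θ k)

/-- The sign `θ_k`, with the convention `θ_0 = 1`. -/
def branchSgn (θ : ℕ → Bool) (k : ℕ) : ℝ :=
  if k = 0 then 1 else if θ k then 1 else -1

/-- The weight `|I_k|⁻¹`, with the convention `|I_0|⁻¹ = |∅|⁻¹ = 1`. -/
def branchWt (k : ℕ) : ℝ := if k = 0 then 1 else 2 ^ (k - 1)

/-- `B_k = I_k \ I_{k+1}`. -/
def branchB (θ : ℕ → Bool) (k : ℕ) : Set ℝ := suppI (branchI θ k) \ suppI (branchI θ (k + 1))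


/-- Lebesgue measure restricted to `[0,1)`. -/
def mu01 : Measure ℝ := volume.restrict (Set.Ico 0 1)

lemma mu01_ne_top (s : Set ℝ) : mu01 s ≠ ⊤ := by
  refine ne_top_of_le_ne_top ?_ (measure_mono (Set.subset_univ s))
  have : mu01 Set.univ = volume (Set.Ico (0:ℝ) 1) := by
    simp [mu01]
  rw [this, Real.volume_Ico]
  exact ENNReal.ofReal_ne_top

/-- indicator of a measurable set, as an element of `L₁[0,1)`. -/
def indL1 (s : Set ℝ) (hs : MeasurableSet s) : Lp ℝ 1 mu01 :=
  indicatorConstLp 1 hs (mu01_ne_top s) (1 : ℝ)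

/-- The Haar system as elements of `L₁[0,1)`, indexed by `D⁺`. -/
def haarL1 : Option (ℕ × ℕ) → Lp ℝ 1 mu01
  | none => indL1 (Set.Ico (0 : ℝ) 1) measurableSet_Ico
  | some (n, i) => indL1 (dyI (n + 1) (2 * i)) measurableSet_Ico
      - indL1 (dyI (n + 1) (2 * i + 1)) measurableSet_Ico

section Tensor

variable {X : Type*} [NormedAddCommGroup X] [NormedSpace ℝ X]

/-- the elementary tensor `f ⊗ x` as an element of the Bochner space `L₁([0,1); X)`. -/
def tensorL1 (f : Lp ℝ 1 mu01) (x : X) : Lp X 1 mu01 :=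
  ((L1.integrable_coeFn f).smul_const x).toL1 _

/-- For an operator `T` on `L₁(X)`, a functional `g ∈ X*` and a vector `x ∈ X`, the operator
`T^{(g,x)} : L₁ → L₁` defined by `⟨e*, T^{(g,x)} e⟩ = ⟨e* ⊗ g, T (e ⊗ x)⟩`; concretely
`T^{(g,x)} e = (s ↦ g ((T (e ⊗ x)) s))`. -/
def entryFun (T : Lp X 1 mu01 →L[ℝ] Lp X 1 mu01) (g : X →L[ℝ] ℝ) (x : X)
    (f : Lp ℝ 1 mu01) : Lp ℝ 1 mu01 :=
  (g.integrable_comp (L1.integrable_coeFn (T (tensorL1 f x)))).toL1 _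

end Tensor

/-- the linear span `Z` of the indicators of dyadic intervals. -/
def dyadicSpan : Submodule ℝ (ℝ → ℝ) :=
  Submodule.span ℝ {f | ∃ n i, i < 2 ^ n ∧ f = (dyI n i).indicator 1}

/-- A Haar system space norm: a norm on the span `Z` of the dyadic indicators which is
invariant under equidistribution and gives `χ_{[0,1)}` norm one.  The corresponding Haar
system space is the completion of `Z` under this norm. -/
structure HaarSystemNorm where
  N : (ℝ → ℝ) → ℝ
  nonneg : ∀ f, 0 ≤ N f
  add_le : ∀ f g, f ∈ dyadicSpan → g ∈ dyadicSpan → N (f + g) ≤ N f + N g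
  smul_eq : ∀ (c : ℝ) f, f ∈ dyadicSpan → N (c • f) = |c| * N f
  eq_zero : ∀ f, f ∈ dyadicSpan → N f = 0 → f = 0
  distrib_inv : ∀ f g, f ∈ dyadicSpan → g ∈ dyadicSpan →
    (∀ t : ℝ, volume {x | t < |f x|} = volume {x | t < |g x|}) → N f = N g
  norm_one : N ((Set.Ico (0 : ℝ) 1).indicator 1) = 1

/-- A realization of the Haar system space determined by a Haar system norm:
a Banach space `X` together with a linear embedding `j` of the span of the dyadic
indicators, which is isometric on the span and has dense range. -/
structure HaarSystemSpace (X : Type*) [NormedAddCommGroup X] [NormedSpace ℝ X] where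
  hn : HaarSystemNorm
  j : (ℝ → ℝ) →ₗ[ℝ] X
  norm_j : ∀ f ∈ dyadicSpan, ‖j f‖ = hn.N f
  dense_j : DenseRange (fun f : dyadicSpan => j f)

/-- the `X`-normalized Haar system `μ_L h_L` in a Haar system space. -/
def HaarSystemSpace.e {X : Type*} [NormedAddCommGroup X] [NormedSpace ℝ X]
    (H : HaarSystemSpace X) (L : Option (ℕ × ℕ)) : X :=
  ‖H.j ((suppI L).indicator 1)‖⁻¹ • H.j (haarP L)

section Factors

variable {X : Type*} [NormedAddCommGroup X] [NormedSpace ℝ X]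

/-- `T` is a `C`-factor of `S` with error `ε`. -/
def IsFactor (C ε : ℝ) (T S : X →L[ℝ] X) : Prop :=
  ∃ A B : X →L[ℝ] X, ‖B.comp (T.comp A) - S‖ ≤ ε ∧ ‖A‖ * ‖B‖ ≤ C

/-- `T` is a `C`-projectional factor of `S` with error `ε`: here `A : X → Y ⊆ X` is the
isomorphism onto a complemented subspace and `B = A⁻¹P` where `P` is the projection,
so that `B ∘ A = Id`. -/
def IsProjFactor (C ε : ℝ) (T S : X →L[ℝ] X) : Prop :=
  ∃ A B : X →L[ℝ] X, B.comp A = ContinuousLinearMap.id ℝ X ∧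
    ‖B.comp (T.comp A) - S‖ ≤ ε ∧ ‖A‖ * ‖B‖ ≤ C

end Factors

/-- the `n`-th Rademacher function `r_n = ∑_{L ∈ D_n} h_L`. -/
def rademacherFn (n : ℕ) : ℝ → ℝ := fun x => ∑ i ∈ Finset.range (2 ^ n), haarFn n i x

/-- Enumeration of the Haar system in the usual linear order `ι`
(`haarEnum 1 = h_∅`, `haarEnum 2 = h_{[0,1)}`, then level by level). -/
def haarEnum : ℕ → ℝ → ℝ := fun m =>
  if m ≤ 1 then (Set.Ico (0 : ℝ) 1).indicator 1
  else haarFn (Nat.log 2 (m - 1)) (m - 2 ^ Nat.log 2 (m - 1) - 1)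

/-- extraction of binary digits: `digitsFn x k` records whether the `k`-th digit of `x`
is `0`, i.e. whether the branch through `x` turns left at step `k`. -/
def digitsFn (x : ℝ) : ℕ → Bool := fun k => decide (⌊x * 2 ^ k⌋ % 2 = 0)

/-- the coin-tossing measure on the space of branches `[D⁺] ≃ {-1,1}^ℕ`, realized as the
image of Lebesgue measure on `[0,1)` under the binary-digit identification. -/
def muBr : Measure (ℕ → Bool) := Measure.map digitsFn mu01

/-- `h_Γ^θ = ∑_{J ∈ Γ} θ_J h_J` for a finite collection `Γ` of dyadic intervals. -/
def hGamma (Γ : Finset (ℕ × ℕ)) (θ : ℕ × ℕ → Bool) : ℝ → ℝ :=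
  fun x => ∑ J ∈ Γ, (if θ J then (1:ℝ) else -1) * haarFn J.1 J.2 x

/-- `Γ* = ∪ {I : I ∈ Γ}`. -/
def GammaStar (Γ : Finset (ℕ × ℕ)) : Set ℝ := ⋃ J ∈ Γ, dyI J.1 J.2

/-- `|Γ*|`, the total length of a disjoint finite collection of dyadic intervals. -/
def lenGamma (Γ : Finset (ℕ × ℕ)) : ℝ := ∑ J ∈ Γ, (1 : ℝ) / 2 ^ J.1


/-- The dual norm `‖χ_s‖_{X*}` of the functional `f ↦ ∫_s f`, computed over the
(dense) span of the dyadic indicators. -/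
def dualNorm (H : HaarSystemNorm) (s : Set ℝ) : ℝ :=
  sSup {r | ∃ f ∈ dyadicSpan, H.N f ≤ 1 ∧ r = ∫ x in s, f x}

/-! ### dyadic interval basics -/

lemma two_pow_pos (m : ℕ) : (0:ℝ) < 2 ^ m := by positivity

lemma mem_dyI {m j : ℕ} {x : ℝ} : x ∈ dyI m j ↔ (j:ℝ) ≤ x * 2 ^ m ∧ x * 2 ^ m < j + 1 := by
  rw [dyI, Set.mem_Ico, div_le_iff₀ (two_pow_pos m), lt_div_iff₀ (two_pow_pos m)]

lemma dyI_meas (m j : ℕ) : MeasurableSet (dyI m j) := measurableSet_Ico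

lemma volume_dyI (m j : ℕ) : volume (dyI m j) = ENNReal.ofReal (1 / 2 ^ m) := by
  rw [dyI, Real.volume_Ico]
  congr 1
  field_simp
  ring

lemma volume_dyI_toReal (m j : ℕ) : (volume (dyI m j)).toReal = 1 / 2 ^ m := by
  rw [volume_dyI, ENNReal.toReal_ofReal (by positivity)]

lemma volume_dyI_lt_top (m j : ℕ) : volume (dyI m j) < ⊤ := by
  rw [volume_dyI]; exact ENNReal.ofReal_lt_top

lemma dyI_zero : dyI 0 0 = Set.Ico (0:ℝ) 1 := by
  simp [dyI]

lemma dyI_nested {n m i j : ℕ} (h : n ≤ m) (h1 : i * 2 ^ (m - n) ≤ j)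
    (h2 : j < (i + 1) * 2 ^ (m - n)) : dyI m j ⊆ dyI n i := by
  intro x hx
  rw [mem_dyI] at hx ⊢
  have hpow : (2:ℝ) ^ m = 2 ^ n * 2 ^ (m - n) := by
    rw [← pow_add, Nat.add_sub_cancel' h]
  have hk := two_pow_pos (m - n)
  constructor
  · have : (i:ℝ) * 2 ^ (m - n) ≤ x * 2 ^ m := by
      calc (i:ℝ) * 2 ^ (m - n) ≤ (j:ℝ) := by exact_mod_cast h1
        _ ≤ x * 2 ^ m := hx.1
    rw [hpow, ← mul_assoc] at this
    exact le_of_mul_le_mul_right this hk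
  · have : x * 2 ^ m < ((i:ℝ) + 1) * 2 ^ (m - n) := by
      calc x * 2 ^ m < (j:ℝ) + 1 := hx.2
        _ ≤ ((i:ℝ) + 1) * 2 ^ (m - n) := by exact_mod_cast h2
    rw [hpow, ← mul_assoc] at this
    exact lt_of_mul_lt_mul_right this hk.le

lemma dyI_inter_nonempty {n m i j : ℕ} (h : n ≤ m) (hne : (dyI n i ∩ dyI m j).Nonempty) :
    i * 2 ^ (m - n) ≤ j ∧ j < (i + 1) * 2 ^ (m - n) := by
  obtain ⟨x, hxi, hxj⟩ := hne
  rw [mem_dyI] at hxi hxj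
  have hpow : (2:ℝ) ^ m = 2 ^ n * 2 ^ (m - n) := by
    rw [← pow_add, Nat.add_sub_cancel' h]
  have hk := two_pow_pos (m - n)
  have hlow : (i:ℝ) * 2 ^ (m - n) < (j:ℝ) + 1 := by
    calc (i:ℝ) * 2 ^ (m - n) ≤ x * 2 ^ n * 2 ^ (m - n) := by
          exact mul_le_mul_of_nonneg_right hxi.1 hk.le
      _ = x * 2 ^ m := by rw [hpow, mul_assoc]
      _ < (j:ℝ) + 1 := hxj.2
  have hhigh : (j:ℝ) < ((i:ℝ) + 1) * 2 ^ (m - n) := by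
    calc (j:ℝ) ≤ x * 2 ^ m := hxj.1
      _ = x * 2 ^ n * 2 ^ (m - n) := by rw [hpow, mul_assoc]
      _ < ((i:ℝ) + 1) * 2 ^ (m - n) := by
          exact mul_lt_mul_of_pos_right hxi.2 hk
  constructor
  · have : (i * 2 ^ (m - n) : ℕ) < j + 1 := by exact_mod_cast (by push_cast; linarith : ((i * 2 ^ (m-n) : ℕ):ℝ) < ((j + 1 : ℕ):ℝ))
    omega
  · have : (j : ℕ) < (i + 1) * 2 ^ (m - n) := by exact_mod_cast (by push_cast; linarith : ((j:ℕ):ℝ) < (((i+1) * 2 ^ (m-n) : ℕ):ℝ))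
    omega

lemma dyI_disj_same {m i j : ℕ} (h : i ≠ j) : dyI m i ∩ dyI m j = ∅ := by
  by_contra hne
  rw [← Ne, ← Set.nonempty_iff_ne_empty] at hne
  have := dyI_inter_nonempty (le_refl m) hne
  simp at this
  omega

lemma dyI_nested_or_disj {n m : ℕ} (h : n ≤ m) (i j : ℕ) :
    dyI m j ⊆ dyI n i ∨ dyI n i ∩ dyI m j = ∅ := by
  by_cases hc : i * 2 ^ (m - n) ≤ j ∧ j < (i + 1) * 2 ^ (m - n)
  · exact Or.inl (dyI_nested h hc.1 hc.2)
  · right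
    by_contra hne
    rw [← Ne, ← Set.nonempty_iff_ne_empty] at hne
    exact hc (dyI_inter_nonempty h hne)

lemma dyI_subset_unit {m j : ℕ} (hj : j < 2 ^ m) : dyI m j ⊆ Set.Ico (0:ℝ) 1 := by
  rw [← dyI_zero]
  exact dyI_nested (Nat.zero_le m) (by simp) (by simpa using hj)

lemma exists_dyI_mem {x : ℝ} (hx : x ∈ Set.Ico (0:ℝ) 1) (m : ℕ) :
    ∃ j < 2 ^ m, x ∈ dyI m j := by
  obtain ⟨hx0, hx1⟩ := hx
  have hxm : 0 ≤ x * 2 ^ m := by positivity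
  refine ⟨⌊x * 2 ^ m⌋₊, ?_, ?_⟩
  · rw [Nat.floor_lt hxm]
    push_cast
    calc x * 2 ^ m < 1 * 2 ^ m := by exact mul_lt_mul_of_pos_right hx1 (two_pow_pos m)
      _ = 2 ^ m := one_mul _
  · rw [mem_dyI]
    exact ⟨Nat.floor_le hxm, Nat.lt_floor_add_one _⟩

/-! ### step functions -/

def stepFn (m : ℕ) (v : ℕ → ℝ) : ℝ → ℝ :=
  fun x => ∑ j ∈ Finset.range (2 ^ m), v j * (dyI m j).indicator 1 x

lemma stepFn_mem (m : ℕ) (v : ℕ → ℝ) : stepFn m v ∈ dyadicSpan := by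
  have : stepFn m v = ∑ j ∈ Finset.range (2 ^ m), v j • (dyI m j).indicator 1 := by
    funext x
    rw [Finset.sum_apply]
    simp [stepFn]
  rw [this]
  refine Submodule.sum_mem _ (fun j hj => ?_)
  exact Submodule.smul_mem _ _ (Submodule.subset_span ⟨m, j, Finset.mem_range.mp hj, rfl⟩)

lemma stepFn_apply_of_mem {m j : ℕ} (hj : j < 2 ^ m) {x : ℝ} (hx : x ∈ dyI m j)
    (v : ℕ → ℝ) : stepFn m v x = v j := by
  rw [stepFn, Finset.sum_eq_single_of_mem j (Finset.mem_range.mpr hj)]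
  · simp [Set.indicator_of_mem hx]
  · intro j' _ hne
    have : x ∉ dyI m j' := by
      intro hx'
      have : x ∈ dyI m j' ∩ dyI m j := ⟨hx', hx⟩
      rw [dyI_disj_same hne] at this
      exact this
    simp [Set.indicator_of_notMem this]

lemma stepFn_apply_of_not_mem {m : ℕ} {x : ℝ} (hx : x ∉ Set.Ico (0:ℝ) 1) (v : ℕ → ℝ) :
    stepFn m v x = 0 := by
  rw [stepFn]
  refine Finset.sum_eq_zero (fun j hj => ?_)
  have : x ∉ dyI m j := fun hx' => hx (dyI_subset_unit (Finset.mem_range.mp hj) hx')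
  simp [Set.indicator_of_notMem this]

lemma indicator_eq_stepFn {n i : ℕ} (hi : i < 2 ^ n) :
    (dyI n i).indicator (1 : ℝ → ℝ) = stepFn n (fun j => if j = i then 1 else 0) := by
  funext x
  rw [stepFn, Finset.sum_eq_single_of_mem i (Finset.mem_range.mpr hi)]
  · simp [Set.indicator_apply]
  · intro j' _ hne
    have : x ∉ dyI n j' ∨ ¬ (j' = i) := Or.inr hne
    simp [hne]

lemma sum_range_two_mul (n : ℕ) (f : ℕ → ℝ) :
    ∑ j ∈ Finset.range (2 * n), f j = ∑ j ∈ Finset.range n, (f (2 * j) + f (2 * j + 1)) := by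
  induction n with
  | zero => simp
  | succ n ih =>
    have : 2 * (n + 1) = (2 * n + 1) + 1 := by ring
    rw [this, Finset.sum_range_succ, Finset.sum_range_succ, ih, Finset.sum_range_succ,
      add_assoc]

lemma dyI_split (m j : ℕ) : dyI m j = dyI (m+1) (2*j) ∪ dyI (m+1) (2*j+1) := by
  have h1 : ((2*j : ℕ) : ℝ) / 2 ^ (m+1) = (j:ℝ) / 2 ^ m := by push_cast; ring
  have h2 : (((2*j+1 : ℕ) : ℝ) + 1) / 2 ^ (m+1) = ((j:ℝ) + 1) / 2 ^ m := by push_cast; ring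
  have h3 : (((2*j : ℕ) : ℝ) + 1) / 2 ^ (m+1) = ((2*j+1 : ℕ) : ℝ) / 2 ^ (m+1) := by
    push_cast; ring
  rw [dyI, dyI, dyI, h3, Set.Ico_union_Ico_eq_Ico, h1, h2]
  · gcongr
    push_cast; linarith
  · rw [h2, div_le_div_iff₀ (two_pow_pos (m+1)) (two_pow_pos m)]
    push_cast [pow_succ]; nlinarith [two_pow_pos m]

lemma stepFn_congr {m : ℕ} {v w : ℕ → ℝ} (h : ∀ j, j < 2 ^ m → v j = w j) :
    stepFn m v = stepFn m w := by
  funext x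
  exact Finset.sum_congr rfl (fun j hj => by rw [h j (Finset.mem_range.mp hj)])

lemma stepFn_succ (m : ℕ) (v : ℕ → ℝ) : stepFn m v = stepFn (m+1) (fun j => v (j / 2)) := by
  funext x
  rw [stepFn, stepFn]
  have h2 : 2 ^ (m+1) = 2 * 2 ^ m := by ring
  rw [h2, sum_range_two_mul]
  refine Finset.sum_congr rfl (fun j hj => ?_)
  have e1 : (2 * j) / 2 = j := by omega
  have e2 : (2 * j + 1) / 2 = j := by omega
  rw [e1, e2]
  have hdisj : Disjoint (dyI (m+1) (2*j)) (dyI (m+1) (2*j+1)) := by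
    rw [Set.disjoint_iff_inter_eq_empty]
    exact dyI_disj_same (by omega)
  rw [dyI_split m j, Set.indicator_union_of_disjoint hdisj]
  simp
  ring

lemma stepFn_refine (m k : ℕ) (v : ℕ → ℝ) :
    stepFn m v = stepFn (m + k) (fun j => v (j / 2 ^ k)) := by
  induction k with
  | zero => simp
  | succ k ih =>
    rw [ih, stepFn_succ]
    refine stepFn_congr (fun j _ => ?_)
    congr 1
    rw [Nat.div_div_eq_div_mul]
    congr 1
    rw [pow_succ]
    ring

lemma stepFn_add (m : ℕ) (v w : ℕ → ℝ) : stepFn m (v + w) = stepFn m v + stepFn m w := by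
  funext x
  simp only [stepFn, Pi.add_apply, ← Finset.sum_add_distrib]
  refine Finset.sum_congr rfl (fun j _ => ?_)
  ring

lemma stepFn_smul (m : ℕ) (c : ℝ) (v : ℕ → ℝ) : stepFn m (c • v) = c • stepFn m v := by
  funext x
  simp only [stepFn, Pi.smul_apply, smul_eq_mul, Finset.mul_sum]
  refine Finset.sum_congr rfl (fun j _ => ?_)
  ring

lemma exists_stepFn {f : ℝ → ℝ} (hf : f ∈ dyadicSpan) : ∃ m v, f = stepFn m v := by
  refine Submodule.span_induction ?_ ?_ ?_ ?_ hf
  · rintro g ⟨n, i, hi, rfl⟩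
    exact ⟨n, _, indicator_eq_stepFn hi⟩
  · exact ⟨0, 0, by funext x; simp [stepFn]⟩
  · rintro g g' _ _ ⟨m, v, rfl⟩ ⟨m', v', rfl⟩
    refine ⟨m + m', (fun j => v (j / 2 ^ m')) + (fun j => v' (j / 2 ^ m)), ?_⟩
    rw [stepFn_add, ← stepFn_refine, Nat.add_comm m m', ← stepFn_refine]
  · rintro c g _ ⟨m, v, rfl⟩
    exact ⟨m, c • v, by rw [stepFn_smul]⟩

/-! ### distribution-based norm equality -/

lemma N_congr_card (H : HaarSystemNorm) (m : ℕ) (v w : ℕ → ℝ)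
    (h : ∀ t : ℝ, ((Finset.range (2 ^ m)).filter (fun j => t < |v j|)).card
        = ((Finset.range (2 ^ m)).filter (fun j => t < |w j|)).card) :
    H.N (stepFn m v) = H.N (stepFn m w) := by
  refine H.distrib_inv _ _ (stepFn_mem m v) (stepFn_mem m w) (fun t => ?_)
  by_cases ht : 0 ≤ t
  · have key : ∀ u : ℕ → ℝ, {x : ℝ | t < |stepFn m u x|}
        = ⋃ j ∈ (Finset.range (2 ^ m)).filter (fun j => t < |u j|), dyI m j := by
      intro u
      ext x
      simp only [Set.mem_setOf_eq, Set.mem_iUnion, Finset.mem_filter, Finset.mem_range]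
      constructor
      · intro hx
        have hx01 : x ∈ Set.Ico (0:ℝ) 1 := by
          by_contra hc
          rw [stepFn_apply_of_not_mem hc] at hx
          simp at hx; linarith
        obtain ⟨j, hj, hxj⟩ := exists_dyI_mem hx01 m
        refine ⟨j, ⟨⟨hj, ?_⟩, hxj⟩⟩
        rwa [stepFn_apply_of_mem hj hxj] at hx
      · rintro ⟨j, ⟨⟨hj, hv⟩, hxj⟩⟩
        rwa [stepFn_apply_of_mem hj hxj]
    rw [key v, key w]
    have vol_eq : ∀ F : Finset ℕ, F ⊆ Finset.range (2 ^ m) →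
        volume (⋃ j ∈ F, dyI m j) = F.card • ENNReal.ofReal (1 / 2 ^ m) := by
      intro F hF
      rw [measure_biUnion_finset ?_ (fun j _ => dyI_meas m j)]
      · rw [Finset.sum_congr rfl (fun j _ => volume_dyI m j), Finset.sum_const]
      · intro a _ b _ hab
        rw [Function.onFun, Set.disjoint_iff_inter_eq_empty]
        exact dyI_disj_same hab
    rw [vol_eq _ (Finset.filter_subset _ _), vol_eq _ (Finset.filter_subset _ _), h t]
  · have key : ∀ u : ℕ → ℝ, {x : ℝ | t < |stepFn m u x|} = Set.univ := by
      intro u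
      ext x
      simp only [Set.mem_setOf_eq, Set.mem_univ, iff_true]
      exact lt_of_lt_of_le (not_le.mp ht) (abs_nonneg _)
    rw [key v, key w]

/-! ### integrals of step functions -/

lemma integrable_ind {s : Set ℝ} (hs : MeasurableSet s) (h : volume s < ⊤) :
    Integrable (s.indicator (1 : ℝ → ℝ)) volume := by
  rw [integrable_indicator_iff hs]
  exact integrableOn_const h.ne

lemma setIntegral_stepFn {n i m : ℕ} (h : n ≤ m) (hi : i < 2 ^ n) (v : ℕ → ℝ) :
    ∫ x in dyI n i, stepFn m v x
      = (∑ j ∈ Finset.Ico (i * 2 ^ (m - n)) ((i + 1) * 2 ^ (m - n)), v j) / 2 ^ m := by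
  have hsub : Finset.Ico (i * 2 ^ (m - n)) ((i + 1) * 2 ^ (m - n)) ⊆ Finset.range (2 ^ m) := by
    intro j hj
    rw [Finset.mem_Ico] at hj
    rw [Finset.mem_range]
    have hle : (i + 1) * 2 ^ (m - n) ≤ 2 ^ n * 2 ^ (m - n) :=
      Nat.mul_le_mul_right _ hi
    rw [← pow_add, Nat.add_sub_cancel' h] at hle
    omega
  have hint : ∀ j ∈ Finset.range (2 ^ m),
      Integrable (fun x => v j * (dyI m j).indicator 1 x) (volume.restrict (dyI n i)) := by
    intro j _
    exact (((integrable_ind (dyI_meas m j) (volume_dyI_lt_top m j)).const_mul (v j)).integrableOn)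
  simp only [stepFn]
  rw [integral_finset_sum _ hint]
  have hterm : ∀ j ∈ Finset.range (2 ^ m),
      ∫ x in dyI n i, v j * (dyI m j).indicator 1 x
        = (if j ∈ Finset.Ico (i * 2 ^ (m - n)) ((i + 1) * 2 ^ (m - n)) then v j / 2 ^ m else 0) := by
    intro j hj
    rw [MeasureTheory.integral_const_mul, setIntegral_indicator (dyI_meas m j)]
    simp only [Pi.one_apply]
    rw [setIntegral_const, measureReal_def]
    by_cases hb : j ∈ Finset.Ico (i * 2 ^ (m - n)) ((i + 1) * 2 ^ (m - n))
    · rw [Finset.mem_Ico] at hb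
      have : dyI n i ∩ dyI m j = dyI m j :=
        Set.inter_eq_self_of_subset_right (dyI_nested h hb.1 hb.2)
      rw [if_pos (Finset.mem_Ico.mpr hb), this, volume_dyI_toReal]
      simp [div_eq_mul_inv, mul_comm]
    · have : dyI n i ∩ dyI m j = ∅ := by
        by_contra hne
        rw [← Ne, ← Set.nonempty_iff_ne_empty] at hne
        exact hb (Finset.mem_Ico.mpr (dyI_inter_nonempty h hne))
      rw [if_neg hb, this]
      simp
  rw [Finset.sum_congr rfl hterm, Finset.sum_ite_mem,
    Finset.inter_eq_right.mpr hsub, Finset.sum_div]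

/-! ### the swap map and the averaging inequality -/

def swapFn (a k : ℕ) : ℕ → ℕ := fun j =>
  if a ≤ j ∧ j < a + k then j + k else if a + k ≤ j ∧ j < a + 2 * k then j - k else j

lemma swapFn_invol (a k : ℕ) (hk : 0 < k) (j : ℕ) : swapFn a k (swapFn a k j) = j := by
  unfold swapFn
  split_ifs <;> omega

lemma swapFn_lt {a k M : ℕ} (hk : 0 < k) (hM : a + 2 * k ≤ M) {j : ℕ} (hj : j < M) :
    swapFn a k j < M := by
  unfold swapFn
  split_ifs <;> omega

lemma card_filter_swap (M a k : ℕ) (hk : 0 < k) (hM : a + 2 * k ≤ M) (u : ℕ → ℝ) (t : ℝ) :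
    ((Finset.range M).filter (fun j => t < |u (swapFn a k j)|)).card
      = ((Finset.range M).filter (fun j => t < |u j|)).card := by
  refine Finset.card_bij' (fun j _ => swapFn a k j) (fun j _ => swapFn a k j) ?_ ?_ ?_ ?_
  · intro b hb
    rw [Finset.mem_filter, Finset.mem_range] at hb ⊢
    exact ⟨swapFn_lt hk hM hb.1, hb.2⟩
  · intro b hb
    rw [Finset.mem_filter, Finset.mem_range] at hb ⊢
    refine ⟨swapFn_lt hk hM hb.1, ?_⟩
    rw [swapFn_invol a k hk]
    exact hb.2
  · intro b _
    exact swapFn_invol a k hk b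
  · intro b _
    exact swapFn_invol a k hk b

lemma avg_step (H : HaarSystemNorm) :
    ∀ d n i : ℕ, i < 2 ^ n → ∀ v : ℕ → ℝ,
      H.N (stepFn (n + d) (fun j => if i * 2 ^ d ≤ j ∧ j < (i + 1) * 2 ^ d
          then (∑ l ∈ Finset.Ico (i * 2 ^ d) ((i + 1) * 2 ^ d), v l) / 2 ^ d else v j))
        ≤ H.N (stepFn (n + d) v) := by
  intro d
  induction d with
  | zero =>
    intro n i hi v
    have hfe : (fun j => if i * 2 ^ 0 ≤ j ∧ j < (i + 1) * 2 ^ 0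
        then (∑ l ∈ Finset.Ico (i * 2 ^ 0) ((i + 1) * 2 ^ 0), v l) / 2 ^ 0 else v j) = v := by
      funext j
      by_cases hc : i * 2 ^ 0 ≤ j ∧ j < (i + 1) * 2 ^ 0
      · rw [if_pos hc]
        obtain rfl : j = i := by simp only [pow_zero, mul_one] at hc; omega
        simp
      · rw [if_neg hc]
    rw [hfe]
  | succ d ih =>
    intro n i hi v
    have hm : n + (d + 1) = n + 1 + d := by omega
    rw [hm]
    have hkpos : 0 < 2 ^ d := Nat.pow_pos (by norm_num)
    have hiL : 2 * i < 2 ^ (n + 1) := by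
      have : 2 ^ (n + 1) = 2 * 2 ^ n := by ring
      omega
    have hiR : 2 * i + 1 < 2 ^ (n + 1) := by
      have : 2 ^ (n + 1) = 2 * 2 ^ n := by ring
      omega
    set a := 2 * i * 2 ^ d with ha
    have e1 : (2 * i + 1) * 2 ^ d = a + 2 ^ d := by rw [ha]; ring
    have e2 : (2 * i + 1 + 1) * 2 ^ d = a + 2 * 2 ^ d := by rw [ha]; ring
    have e3 : i * 2 ^ (d + 1) = a := by rw [ha]; ring
    have e4 : (i + 1) * 2 ^ (d + 1) = a + 2 * 2 ^ d := by rw [ha]; ring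
    have hub : a + 2 * 2 ^ d ≤ 2 ^ (n + 1 + d) := by
      have h1 : (2 * i + 2) * 2 ^ d ≤ 2 ^ (n + 1) * 2 ^ d :=
        Nat.mul_le_mul_right _ (by omega)
      have h2 : 2 ^ (n + 1) * 2 ^ d = 2 ^ (n + 1 + d) := by rw [← pow_add]
      have h3 : (2 * i + 2) * 2 ^ d = a + 2 * 2 ^ d := by rw [ha]; ring
      omega
    -- first averaging: left half-block
    have hstep1 := ih (n + 1) (2 * i) hiL v
    rw [e1] at hstep1
    set v1 : ℕ → ℝ := fun j => if a ≤ j ∧ j < a + 2 ^ d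
        then (∑ l ∈ Finset.Ico a (a + 2 ^ d), v l) / 2 ^ d else v j with hv1
    -- second averaging: right half-block
    have hstep2 := ih (n + 1) (2 * i + 1) hiR v1
    rw [e1, e2] at hstep2
    set v2 : ℕ → ℝ := fun j => if a + 2 ^ d ≤ j ∧ j < a + 2 * 2 ^ d
        then (∑ l ∈ Finset.Ico (a + 2 ^ d) (a + 2 * 2 ^ d), v1 l) / 2 ^ d else v1 j with hv2
    have hS : ∑ l ∈ Finset.Ico (a + 2 ^ d) (a + 2 * 2 ^ d), v1 l
        = ∑ l ∈ Finset.Ico (a + 2 ^ d) (a + 2 * 2 ^ d), v l := by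
      refine Finset.sum_congr rfl (fun l hl => ?_)
      rw [Finset.mem_Ico] at hl
      rw [hv1]
      simp only
      rw [if_neg (by omega)]
    -- the swap
    set v3 : ℕ → ℝ := fun j => v2 (swapFn a (2 ^ d) j) with hv3
    have hstep3 : H.N (stepFn (n + 1 + d) v3) = H.N (stepFn (n + 1 + d) v2) :=
      N_congr_card H _ v3 v2 (fun t => card_filter_swap _ a (2 ^ d) hkpos hub v2 t)
    -- the average of v2 and v3
    set w : ℕ → ℝ := fun j => (v2 j + v3 j) / 2 with hw
    have hwsmul : w = (1/2 : ℝ) • (v2 + v3) := by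
      funext j
      simp only [hw, Pi.smul_apply, Pi.add_apply, smul_eq_mul]
      ring
    have hNw : H.N (stepFn (n + 1 + d) w) ≤ H.N (stepFn (n + 1 + d) v2) := by
      rw [hwsmul, stepFn_smul, H.smul_eq _ _ (stepFn_mem _ _), stepFn_add]
      calc |1/2| * H.N (stepFn (n+1+d) v2 + stepFn (n+1+d) v3)
          ≤ |1/2| * (H.N (stepFn (n+1+d) v2) + H.N (stepFn (n+1+d) v3)) := by
            apply mul_le_mul_of_nonneg_left
              (H.add_le _ _ (stepFn_mem _ _) (stepFn_mem _ _)) (abs_nonneg _)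
        _ = H.N (stepFn (n+1+d) v2) := by
            rw [hstep3]
            rw [abs_of_pos (by norm_num : (0:ℝ) < 1/2)]
            ring
    -- identify w with the target average function
    have hfinal : (fun j => if i * 2 ^ (d+1) ≤ j ∧ j < (i + 1) * 2 ^ (d+1)
        then (∑ l ∈ Finset.Ico (i * 2 ^ (d+1)) ((i + 1) * 2 ^ (d+1)), v l) / 2 ^ (d+1)
        else v j) = w := by
      funext j
      rw [e3, e4]
      have hsplit : ∑ l ∈ Finset.Ico a (a + 2 * 2 ^ d), v l
          = (∑ l ∈ Finset.Ico a (a + 2 ^ d), v l)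
            + ∑ l ∈ Finset.Ico (a + 2 ^ d) (a + 2 * 2 ^ d), v l := by
        rw [Finset.sum_Ico_consecutive _ (by omega) (by omega)]
      have hpow : (2:ℝ) ^ (d+1) = 2 ^ d * 2 := by ring
      by_cases hc : a ≤ j ∧ j < a + 2 * 2 ^ d
      · rw [if_pos hc]
        by_cases hcl : j < a + 2 ^ d
        · -- left half
          have hv2j : v2 j = (∑ l ∈ Finset.Ico a (a + 2 ^ d), v l) / 2 ^ d := by
            rw [hv2]; simp only
            rw [if_neg (by omega), hv1]
            simp only
            rw [if_pos (by omega)]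
          have hv3j : v3 j = (∑ l ∈ Finset.Ico (a + 2 ^ d) (a + 2 * 2 ^ d), v l) / 2 ^ d := by
            rw [hv3]; simp only
            have hsw : swapFn a (2 ^ d) j = j + 2 ^ d := by
              unfold swapFn; rw [if_pos (by omega)]
            rw [hsw, hv2]; simp only
            rw [if_pos (by omega), hS]
          rw [hw]; simp only
          rw [hv2j, hv3j, hsplit, hpow]
          field_simp <;> ring
        · -- right half
          have hv2j : v2 j = (∑ l ∈ Finset.Ico (a + 2 ^ d) (a + 2 * 2 ^ d), v l) / 2 ^ d := by
            rw [hv2]; simp only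
            rw [if_pos (by omega), hS]
          have hv3j : v3 j = (∑ l ∈ Finset.Ico a (a + 2 ^ d), v l) / 2 ^ d := by
            rw [hv3]; simp only
            have hsw : swapFn a (2 ^ d) j = j - 2 ^ d := by
              unfold swapFn; rw [if_neg (by omega), if_pos (by omega)]
            rw [hsw, hv2]; simp only
            rw [if_neg (by omega), hv1]
            simp only
            rw [if_pos (by omega)]
          rw [hw]; simp only
          rw [hv2j, hv3j, hsplit, hpow]
          field_simp <;> ring
      · rw [if_neg hc]
        have hv2j : v2 j = v j := by
          rw [hv2]; simp only
          rw [if_neg (by omega), hv1]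
          simp only
          rw [if_neg (by omega)]
        have hv3j : v3 j = v j := by
          rw [hv3]; simp only
          have hsw : swapFn a (2 ^ d) j = j := by
            unfold swapFn; rw [if_neg (by omega), if_neg (by omega)]
          rw [hsw, hv2j]
        rw [hw]; simp only
        rw [hv2j, hv3j]
        ring
    rw [hfinal]
    exact le_trans hNw (le_trans hstep2 hstep1)

/-! ### killing the outside and the dual norm -/

lemma nat_div_eq_iff {k i n : ℕ} (hk : 0 < k) : n / k = i ↔ i * k ≤ n ∧ n < (i + 1) * k := by
  constructor
  · rintro rfl
    exact ⟨Nat.div_mul_le_self n k, (Nat.div_lt_iff_lt_mul hk).mp (Nat.lt_succ_self _)⟩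
  · rintro ⟨h1, h2⟩
    have ha : i ≤ n / k := (Nat.le_div_iff_mul_le hk).mpr h1
    have hb : n / k < i + 1 := (Nat.div_lt_iff_lt_mul hk).mpr h2
    omega

lemma abs_avg_mul_N_le (H : HaarSystemNorm) {n m i : ℕ} (h : n ≤ m) (hi : i < 2 ^ n)
    (v : ℕ → ℝ) :
    |(∑ l ∈ Finset.Ico (i * 2 ^ (m - n)) ((i + 1) * 2 ^ (m - n)), v l) / 2 ^ (m - n)|
      * H.N ((dyI n i).indicator 1) ≤ H.N (stepFn m v) := by
  obtain ⟨d, rfl⟩ : ∃ d, m = n + d := ⟨m - n, by omega⟩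
  have hd : n + d - n = d := by omega
  rw [hd]
  have hkpos : 0 < 2 ^ d := Nat.pow_pos (by norm_num)
  have hmem : (dyI n i).indicator (1 : ℝ → ℝ) ∈ dyadicSpan :=
    Submodule.subset_span ⟨n, i, hi, rfl⟩
  set S : ℝ := ∑ l ∈ Finset.Ico (i * 2 ^ d) ((i + 1) * 2 ^ d), v l with hS
  set w : ℕ → ℝ := fun j => if i * 2 ^ d ≤ j ∧ j < (i + 1) * 2 ^ d
      then S / 2 ^ d else v j with hw
  have h1 : H.N (stepFn (n + d) w) ≤ H.N (stepFn (n + d) v) := avg_step H d n i hi v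
  set w' : ℕ → ℝ := fun j => if i * 2 ^ d ≤ j ∧ j < (i + 1) * 2 ^ d
      then S / 2 ^ d else -v j with hw'
  have h2 : H.N (stepFn (n + d) w') = H.N (stepFn (n + d) w) := by
    refine N_congr_card H _ w' w (fun t => ?_)
    congr 1
    refine Finset.filter_congr (fun j _ => ?_)
    have : |w' j| = |w j| := by
      rw [hw, hw']
      simp only
      by_cases hc : i * 2 ^ d ≤ j ∧ j < (i + 1) * 2 ^ d
      · rw [if_pos hc, if_pos hc]
      · rw [if_neg hc, if_neg hc, abs_neg]
    rw [this]
  set u : ℕ → ℝ := fun j => if i * 2 ^ d ≤ j ∧ j < (i + 1) * 2 ^ d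
      then S / 2 ^ d else 0 with hu
  have hu2 : (1/2 : ℝ) • (w + w') = u := by
    funext j
    simp only [Pi.smul_apply, Pi.add_apply, smul_eq_mul, hw, hw', hu]
    by_cases hc : i * 2 ^ d ≤ j ∧ j < (i + 1) * 2 ^ d
    · rw [if_pos hc, if_pos hc, if_pos hc]; ring
    · rw [if_neg hc, if_neg hc, if_neg hc]; ring
  have h3 : H.N (stepFn (n + d) u) ≤ H.N (stepFn (n + d) w) := by
    rw [← hu2, stepFn_smul, H.smul_eq _ _ (stepFn_mem _ _), stepFn_add]
    calc |1/2| * H.N (stepFn (n+d) w + stepFn (n+d) w')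
        ≤ |1/2| * (H.N (stepFn (n+d) w) + H.N (stepFn (n+d) w')) :=
          mul_le_mul_of_nonneg_left
            (H.add_le _ _ (stepFn_mem _ _) (stepFn_mem _ _)) (abs_nonneg _)
      _ = H.N (stepFn (n+d) w) := by
          rw [h2, abs_of_pos (by norm_num : (0:ℝ) < 1/2)]; ring
  have h4 : stepFn (n + d) u = (S / 2 ^ d) • (dyI n i).indicator 1 := by
    rw [indicator_eq_stepFn hi, stepFn_refine n d, ← stepFn_smul]
    refine stepFn_congr (fun j _ => ?_)
    simp only [hu, Pi.smul_apply, smul_eq_mul]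
    by_cases hc : i * 2 ^ d ≤ j ∧ j < (i + 1) * 2 ^ d
    · rw [if_pos hc, if_pos ((nat_div_eq_iff hkpos).mpr hc), mul_one]
    · rw [if_neg hc, if_neg (fun he => hc ((nat_div_eq_iff hkpos).mp he)), mul_zero]
  have h5 : H.N (stepFn (n + d) u) = |S / 2 ^ d| * H.N ((dyI n i).indicator 1) := by
    rw [h4, H.smul_eq _ _ hmem]
  rw [← h5]
  exact le_trans h3 h1

lemma N_indicator_pos (H : HaarSystemNorm) {n i : ℕ} (hi : i < 2 ^ n) :
    0 < H.N ((dyI n i).indicator 1) := by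
  have hmem : (dyI n i).indicator (1 : ℝ → ℝ) ∈ dyadicSpan :=
    Submodule.subset_span ⟨n, i, hi, rfl⟩
  rcases (H.nonneg ((dyI n i).indicator 1)).lt_or_eq with h | h
  · exact h
  · exfalso
    have hzero := H.eq_zero _ hmem h.symm
    have hxmem : (i : ℝ) / 2 ^ n ∈ dyI n i := by
      rw [mem_dyI]
      constructor
      · rw [div_mul_cancel₀]
        exact (two_pow_pos n).ne'
      · rw [div_mul_cancel₀]
        · linarith
        · exact (two_pow_pos n).ne'
    have := congrFun hzero ((i : ℝ) / 2 ^ n)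
    rw [Set.indicator_of_mem hxmem] at this
    simp at this

lemma dualNorm_dyI (H : HaarSystemNorm) {n i : ℕ} (hi : i < 2 ^ n) :
    dualNorm H (dyI n i) = (1 / 2 ^ n) / H.N ((dyI n i).indicator 1) := by
  have hN := N_indicator_pos H hi
  have hmem : (dyI n i).indicator (1 : ℝ → ℝ) ∈ dyadicSpan :=
    Submodule.subset_span ⟨n, i, hi, rfl⟩
  refine IsGreatest.csSup_eq ⟨?_, ?_⟩
  · refine ⟨(H.N ((dyI n i).indicator 1))⁻¹ • (dyI n i).indicator 1,
      Submodule.smul_mem _ _ hmem, ?_, ?_⟩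
    · rw [H.smul_eq _ _ hmem, abs_of_pos (inv_pos.mpr hN)]
      rw [inv_mul_cancel₀ hN.ne']
    · have hint : ∫ x in dyI n i,
          ((H.N ((dyI n i).indicator 1))⁻¹ • (dyI n i).indicator (1:ℝ→ℝ)) x
          = (H.N ((dyI n i).indicator 1))⁻¹ * (1 / 2 ^ n) := by
        simp only [Pi.smul_apply, smul_eq_mul]
        rw [MeasureTheory.integral_const_mul, setIntegral_indicator (dyI_meas n i),
          Set.inter_self]
        simp only [Pi.one_apply]
        rw [setIntegral_const, measureReal_def, volume_dyI_toReal, smul_eq_mul, mul_one]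
      rw [hint]
      field_simp
  · rintro r ⟨f, hf, hNf, rfl⟩
    obtain ⟨m0, v0, rfl⟩ := exists_stepFn hf
    rw [stepFn_refine m0 (n - m0) v0] at hNf ⊢
    set m := m0 + (n - m0) with hm0
    have hm : n ≤ m := by omega
    set v : ℕ → ℝ := fun j => v0 (j / 2 ^ (n - m0)) with hv
    have hkey := abs_avg_mul_N_le H hm hi v
    rw [setIntegral_stepFn hm hi v]
    set S : ℝ := ∑ j ∈ Finset.Ico (i * 2 ^ (m - n)) ((i + 1) * 2 ^ (m - n)), v j with hSdef
    have habs : |S / 2 ^ (m - n)| ≤ 1 / H.N ((dyI n i).indicator 1) := by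
      rw [le_div_iff₀ hN]
      exact le_trans hkey hNf
    have h2m : (2:ℝ) ^ m = 2 ^ (m - n) * 2 ^ n := by
      rw [← pow_add]
      congr 1
      omega
    calc S / 2 ^ m = (S / 2 ^ (m - n)) / 2 ^ n := by rw [h2m, div_div]
      _ ≤ |S / 2 ^ (m - n)| / 2 ^ n := by
          gcongr
          exact le_abs_self _
      _ ≤ (1 / H.N ((dyI n i).indicator 1)) / 2 ^ n := by
          gcongr
      _ = (1 / 2 ^ n) / H.N ((dyI n i).indicator 1) := by
          rw [div_div, div_div, mul_comm]

lemma part1 (H : HaarSystemNorm) {n i : ℕ} (hi : i < 2 ^ n) :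
    H.N ((dyI n i).indicator 1) * dualNorm H (dyI n i) = 1 / 2 ^ n := by
  have hN := N_indicator_pos H hi
  rw [dualNorm_dyI H hi]
  field_simp

/-! ### integrals of Haar products -/

lemma integral_ind_eq {s : Set ℝ} (hs : MeasurableSet s) :
    ∫ x, s.indicator (1 : ℝ → ℝ) x = (volume s).toReal := by
  rw [MeasureTheory.integral_indicator hs]
  simp only [Pi.one_apply]
  rw [setIntegral_const, measureReal_def, smul_eq_mul, mul_one]

lemma ind_mul_ind (s t : Set ℝ) (x : ℝ) :
    s.indicator (1:ℝ→ℝ) x * t.indicator 1 x = (s ∩ t).indicator (1:ℝ→ℝ) x := by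
  simp only [Set.indicator_apply, Set.mem_inter_iff]
  split_ifs <;> simp_all

lemma integral_pair2 {A B C D : Set ℝ} (hA : MeasurableSet A) (hB : MeasurableSet B)
    (hC : MeasurableSet C) (hD : MeasurableSet D)
    (hAf : volume A < ⊤) (hBf : volume B < ⊤) :
    ∫ x, (A.indicator 1 x - B.indicator 1 x) * (C.indicator 1 x - D.indicator 1 x)
      = (volume (A ∩ C)).toReal - (volume (A ∩ D)).toReal
        - (volume (B ∩ C)).toReal + (volume (B ∩ D)).toReal := by
  have hfe : (fun x => (A.indicator (1:ℝ→ℝ) x - B.indicator 1 x)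
        * (C.indicator (1:ℝ→ℝ) x - D.indicator 1 x))
      = fun x => ((A ∩ C).indicator (1:ℝ→ℝ) x - (A ∩ D).indicator 1 x)
        - ((B ∩ C).indicator (1:ℝ→ℝ) x - (B ∩ D).indicator 1 x) := by
    funext x
    rw [← ind_mul_ind, ← ind_mul_ind, ← ind_mul_ind, ← ind_mul_ind]
    ring
  have fin : ∀ (s t : Set ℝ), volume s < ⊤ → volume (s ∩ t) < ⊤ := fun s t hs =>
    lt_of_le_of_lt (measure_mono Set.inter_subset_left) hs
  have iAC := integrable_ind (hA.inter hC) (fin _ _ hAf)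
  have iAD := integrable_ind (hA.inter hD) (fin _ _ hAf)
  have iBC := integrable_ind (hB.inter hC) (fin _ _ hBf)
  have iBD := integrable_ind (hB.inter hD) (fin _ _ hBf)
  have i1 : Integrable (fun x => (A ∩ C).indicator (1:ℝ→ℝ) x - (A ∩ D).indicator 1 x)
      volume := iAC.sub iAD
  have i2 : Integrable (fun x => (B ∩ C).indicator (1:ℝ→ℝ) x - (B ∩ D).indicator 1 x)
      volume := iBC.sub iBD
  rw [hfe, integral_sub i1 i2, integral_sub iAC iAD,
    integral_sub iBC iBD, integral_ind_eq (hA.inter hC), integral_ind_eq (hA.inter hD),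
    integral_ind_eq (hB.inter hC), integral_ind_eq (hB.inter hD)]
  ring

lemma haarFn_eq (n i : ℕ) : haarFn n i
    = fun x => (dyI (n+1) (2*i)).indicator 1 x - (dyI (n+1) (2*i+1)).indicator 1 x := by
  funext x
  unfold haarFn
  by_cases h1 : x ∈ dyI (n+1) (2*i)
  · have h2 : x ∉ dyI (n+1) (2*i+1) := by
      intro h2
      have : x ∈ dyI (n+1) (2*i) ∩ dyI (n+1) (2*i+1) := ⟨h1, h2⟩
      rw [dyI_disj_same (by omega)] at this
      exact this
    simp [h1, h2]
  · by_cases h2 : x ∈ dyI (n+1) (2*i+1) <;> simp [h1, h2]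

lemma haarP_none_eq : haarP none
    = fun x => (Set.Ico (0:ℝ) 1).indicator 1 x - (∅ : Set ℝ).indicator 1 x := by
  funext x
  simp [haarP]

lemma volume_Ico01 : volume (Set.Ico (0:ℝ) 1) < ⊤ := by
  rw [Real.volume_Ico]
  exact ENNReal.ofReal_lt_top

lemma integral_one_sq : ∫ x, haarP none x * haarP none x = 1 := by
  simp only [haarP_none_eq]
  rw [integral_pair2 measurableSet_Ico MeasurableSet.empty
    measurableSet_Ico MeasurableSet.empty volume_Ico01 (by simp)]
  simp [Real.volume_Ico]

lemma integral_haar_sq (n i : ℕ) : ∫ x, haarFn n i x * haarFn n i x = 1 / 2 ^ n := by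
  simp only [haarFn_eq]
  rw [integral_pair2 (dyI_meas _ _) (dyI_meas _ _) (dyI_meas _ _) (dyI_meas _ _)
    (volume_dyI_lt_top _ _) (volume_dyI_lt_top _ _)]
  rw [Set.inter_self, Set.inter_self, dyI_disj_same (by omega : 2*i ≠ 2*i+1),
    dyI_disj_same (by omega : 2*i+1 ≠ 2*i), volume_dyI_toReal, volume_dyI_toReal]
  simp only [measure_empty, ENNReal.toReal_zero]
  rw [pow_succ]
  ring

lemma integral_none_haar (n i : ℕ) (hi : i < 2 ^ n) :
    ∫ x, haarP none x * haarFn n i x = 0 := by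
  simp only [haarP_none_eq, haarFn_eq]
  rw [integral_pair2 measurableSet_Ico MeasurableSet.empty
    (dyI_meas _ _) (dyI_meas _ _) volume_Ico01 (by simp)]
  have h2 : 2 ^ (n + 1) = 2 * 2 ^ n := by ring
  have hA : Set.Ico (0:ℝ) 1 ∩ dyI (n+1) (2*i) = dyI (n+1) (2*i) :=
    Set.inter_eq_self_of_subset_right (dyI_subset_unit (by omega))
  have hB : Set.Ico (0:ℝ) 1 ∩ dyI (n+1) (2*i+1) = dyI (n+1) (2*i+1) :=
    Set.inter_eq_self_of_subset_right (dyI_subset_unit (by omega))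
  rw [hA, hB, volume_dyI_toReal, volume_dyI_toReal]
  simp

lemma integral_haar_haar {n i m j : ℕ} (h : n ≤ m) (hne : (n, i) ≠ (m, j)) :
    ∫ x, haarFn n i x * haarFn m j x = 0 := by
  rcases Nat.eq_or_lt_of_le h with rfl | hlt
  · have hij : i ≠ j := by simpa using hne
    simp only [haarFn_eq]
    rw [integral_pair2 (dyI_meas _ _) (dyI_meas _ _) (dyI_meas _ _)
      (dyI_meas _ _) (volume_dyI_lt_top _ _) (volume_dyI_lt_top _ _)]
    rw [dyI_disj_same (by omega : 2*i ≠ 2*j), dyI_disj_same (by omega : 2*i ≠ 2*j+1),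
      dyI_disj_same (by omega : 2*i+1 ≠ 2*j), dyI_disj_same (by omega : 2*i+1 ≠ 2*j+1)]
    simp
  · rw [haarFn_eq, haarFn_eq, integral_pair2 (dyI_meas _ _) (dyI_meas _ _) (dyI_meas _ _)
      (dyI_meas _ _) (volume_dyI_lt_top _ _) (volume_dyI_lt_top _ _)]
    have e : m + 1 - m = 1 := by omega
    have hA' : dyI (m+1) (2*j) ⊆ dyI m j :=
      dyI_nested (by omega) (by rw [e, pow_one]; omega) (by rw [e, pow_one]; omega)
    have hB' : dyI (m+1) (2*j+1) ⊆ dyI m j :=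
      dyI_nested (by omega) (by rw [e, pow_one]; omega) (by rw [e, pow_one]; omega)
    have key : ∀ s : Set ℝ, MeasurableSet s →
        (dyI m j ⊆ s ∨ s ∩ dyI m j = ∅) →
        (volume (s ∩ dyI (m+1) (2*j))).toReal = (volume (s ∩ dyI (m+1) (2*j+1))).toReal := by
      rintro s _ (hsub | hdisj)
      · rw [Set.inter_eq_self_of_subset_right (hA'.trans hsub),
          Set.inter_eq_self_of_subset_right (hB'.trans hsub),
          volume_dyI_toReal, volume_dyI_toReal]
      · have e1 : s ∩ dyI (m+1) (2*j) = ∅ := by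
          apply Set.eq_empty_of_subset_empty
          rw [← hdisj]
          exact Set.inter_subset_inter_right s hA'
        have e2 : s ∩ dyI (m+1) (2*j+1) = ∅ := by
          apply Set.eq_empty_of_subset_empty
          rw [← hdisj]
          exact Set.inter_subset_inter_right s hB'
        rw [e1, e2]
    have hcaseA := key _ (dyI_meas (n+1) (2*i)) (dyI_nested_or_disj (by omega) (2*i) j)
    have hcaseB := key _ (dyI_meas (n+1) (2*i+1)) (dyI_nested_or_disj (by omega) (2*i+1) j)
    rw [hcaseA, hcaseB]
    ring

lemma integral_mul_comm (f g : ℝ → ℝ) : ∫ x, f x * g x = ∫ x, g x * f x := by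
  simp_rw [mul_comm]


theorem statement12 (H : HaarSystemNorm) :
    (∀ n i : ℕ, i < 2 ^ n →
      H.N ((dyI n i).indicator 1) * dualNorm H (dyI n i) = 1 / 2 ^ n) ∧
    ∀ I J : Option (ℕ × ℕ), validIdx I → validIdx J →
      (dualNorm H (suppI I))⁻¹ * (H.N ((suppI J).indicator 1))⁻¹ *
          (∫ x, haarP I x * haarP J x) = if I = J then 1 else 0 := by
  constructor
  · intro n i hi
    exact part1 H hi
  · intro I J hI hJ
    by_cases hIJ : I = J
    · subst hIJ
      rw [if_pos rfl]
      obtain _ | ⟨n, i⟩ := I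
      · rw [integral_one_sq]
        simp only [suppI]
        rw [H.norm_one, ← dyI_zero, dualNorm_dyI H (show (0:ℕ) < 2 ^ 0 by norm_num),
          dyI_zero, H.norm_one]
        norm_num
      · have hi : i < 2 ^ n := hI
        have hN := N_indicator_pos H hi
        have hint : ∫ x, haarP (some (n, i)) x * haarP (some (n, i)) x = 1 / 2 ^ n :=
          integral_haar_sq n i
        rw [hint]
        simp only [suppI]
        rw [dualNorm_dyI H hi]
        field_simp
    · rw [if_neg hIJ]
      have hint : ∫ x, haarP I x * haarP J x = 0 := by
        obtain _ | ⟨n, i⟩ := I <;> obtain _ | ⟨m, j⟩ := J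
        · exact absurd rfl hIJ
        · exact integral_none_haar m j hJ
        · rw [integral_mul_comm]
          exact integral_none_haar n i hI
        · have hp : (n, i) ≠ (m, j) := fun h => hIJ (congrArg some h)
          rcases le_total n m with h | h
          · exact integral_haar_haar h hp
          · rw [integral_mul_comm]
            exact integral_haar_haar h hp.symm
      rw [hint, mul_zero]

end
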